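/- Let X ∈ ℝⁿ be a column vector with X'GX ≠ 0. Then, as ξ → 0⁺, the rescaled matrix ν(ξ)·Σ(ξ)^{-1}X(X'Σ(ξ)^{-1}X)^{-1}X'Σ(ξ)^{-1} converges entrywise to H = GXX'G/(X'GX), and H ≠ 0. -/

import Mathlib

open Matrix Filter Topology

/-- The all-ones vector. -/
def ones (n : ℕ) : Fin n → ℝ := fun _ => 1

/-- G = D⁻¹ − D⁻¹11'D⁻¹/(1'D⁻¹1). -/
noncomputable def Gmat {n : ℕ} (D : Matrix (Fin n) (Fin n) ℝ) : Matrix (Fin n) (Fin n) ℝ :=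
  D⁻¹ - (ones n ⬝ᵥ D⁻¹.mulVec (ones n))⁻¹ • (D⁻¹ * vecMulVec (ones n) (ones n) * D⁻¹)

/-- H = GXX'G/(X'GX). -/
noncomputable def Hmat {n : ℕ} (D : Matrix (Fin n) (Fin n) ℝ) (X : Fin n → ℝ) :
    Matrix (Fin n) (Fin n) ℝ :=
  (X ⬝ᵥ (Gmat D).mulVec X)⁻¹ • (Gmat D * vecMulVec X X * Gmat D)

lemma vmv_mul_vmv {n : ℕ} (u v w z : Fin n → ℝ) (B : Matrix (Fin n) (Fin n) ℝ) :
    vecMulVec u v * B * vecMulVec w z = (v ⬝ᵥ B.mulVec w) • vecMulVec u z := by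
  ext i j
  simp only [mul_apply, vecMulVec_apply, Matrix.smul_apply, dotProduct, mulVec, smul_eq_mul,
    Finset.sum_mul, Finset.mul_sum]
  rw [Finset.sum_comm]
  exact Finset.sum_congr rfl fun l _ => Finset.sum_congr rfl fun k _ => by ring

lemma mul_vmv_mul {n : ℕ} (X : Fin n → ℝ) (A B : Matrix (Fin n) (Fin n) ℝ) :
    A * vecMulVec X X * B = vecMulVec (A.mulVec X) (X ᵥ* B) := by
  ext i j
  simp only [mul_apply, vecMulVec_apply, mulVec, vecMul, dotProduct, Finset.sum_mul,
    Finset.mul_sum]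
  exact Finset.sum_congr rfl fun k _ => Finset.sum_congr rfl fun l _ => by ring

/-- Sherman–Morrison style identity. -/
lemma SM_identity {n : ℕ} (M : Matrix (Fin n) (Fin n) ℝ) (hu : IsUnit M.det) (u v : Fin n → ℝ)
    (t : ℝ) (ht : t ≠ 0) (hc : t + v ⬝ᵥ M⁻¹.mulVec u ≠ 0) :
    (vecMulVec u v + t • M) *
      (t⁻¹ • (M⁻¹ - (t + v ⬝ᵥ M⁻¹.mulVec u)⁻¹ • (M⁻¹ * vecMulVec u v * M⁻¹))) = 1 := by
  set N := M⁻¹ with hN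
  set P := vecMulVec u v with hP
  set s := v ⬝ᵥ N.mulVec u with hs
  set c := t + s with hcdef
  have hMN : M * N = 1 := mul_nonsing_inv M hu
  have key : P * N * P = s • P := vmv_mul_vmv u v u v N
  have step1 : (P + t • M) * (t⁻¹ • (N - c⁻¹ • (N * P * N)))
      = t⁻¹ • (P * N) - (t⁻¹ * c⁻¹) • (P * (N * (P * N)))
        + ((t * t⁻¹) • (M * N) - (t * (t⁻¹ * c⁻¹)) • (M * (N * (P * N)))) := by
    simp only [Matrix.mul_smul, Matrix.smul_mul, Matrix.mul_sub, Matrix.add_mul, smul_smul,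
      smul_sub, smul_add, Matrix.mul_assoc]
    module
  rw [step1]
  have h2 : P * (N * (P * N)) = s • (P * N) := by
    rw [show P * (N * (P * N)) = (P * N * P) * N by rw [Matrix.mul_assoc, Matrix.mul_assoc],
      key, Matrix.smul_mul]
  have h3 : M * (N * (P * N)) = P * N := by
    rw [← Matrix.mul_assoc, hMN, Matrix.one_mul]
  rw [h2, hMN, h3, smul_smul, mul_inv_cancel₀ ht, one_smul]
  have hco : t⁻¹ - (t⁻¹ * c⁻¹ * s) - t * (t⁻¹ * c⁻¹) = 0 := by
    field_simp
    ring
  have hfin : t⁻¹ • (P * N) - (t⁻¹ * c⁻¹ * s) • (P * N) + (1 - (t * (t⁻¹ * c⁻¹)) • (P * N))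
      = (t⁻¹ - (t⁻¹ * c⁻¹ * s) - t * (t⁻¹ * c⁻¹)) • (P * N) + 1 := by
    module
  rw [hfin, hco, zero_smul, zero_add]

/-- as ξ → 0⁺, ν(ξ)·Σ(ξ)⁻¹X(X'Σ(ξ)⁻¹X)⁻¹X'Σ(ξ)⁻¹ converges entrywise to
H = GXX'G/(X'GX), and H ≠ 0. -/
theorem rescaled_projection_tendsto_H
    (n : ℕ) (hn : 2 ≤ n)
    (D : Matrix (Fin n) (Fin n) ℝ) (hDsymm : D.IsSymm) (hDdet : IsUnit D.det)
    (hD1 : ones n ⬝ᵥ D⁻¹.mulVec (ones n) ≠ 0)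
    (ν : ℝ → ℝ) (hνpos : ∀ ξ > 0, 0 < ν ξ)
    (hν0 : Tendsto ν (𝓝[>] 0) (𝓝 0))
    (Sg : ℝ → Matrix (Fin n) (Fin n) ℝ) (hpd : ∀ ξ > 0, (Sg ξ).PosDef)
    (E : ℝ → Matrix (Fin n) (Fin n) ℝ)
    (hE : ∀ i j, Tendsto (fun ξ => E ξ i j) (𝓝[>] 0) (𝓝 0))
    (hdecomp : ∀ ξ > 0, Sg ξ = vecMulVec (ones n) (ones n) + ν ξ • (D + E ξ))
    (X : Fin n → ℝ) (hX : X ⬝ᵥ (Gmat D).mulVec X ≠ 0) :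
    (∀ i j,
      Tendsto
        (fun ξ =>
          ν ξ *
            ((X ⬝ᵥ (Sg ξ)⁻¹.mulVec X)⁻¹ •
              ((Sg ξ)⁻¹ * vecMulVec X X * (Sg ξ)⁻¹)) i j)
        (𝓝[>] 0) (𝓝 (Hmat D X i j))) ∧
    Hmat D X ≠ 0 := by
  set l : Filter ℝ := 𝓝[>] (0:ℝ) with hl
  -- M ξ = D + E ξ tends to D
  have hM : Tendsto (fun ξ => D + E ξ) l (𝓝 D) := by
    refine tendsto_pi_nhds.2 fun i => tendsto_pi_nhds.2 fun j => ?_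
    have := (hE i j).const_add (D i j)
    simpa using this
  have hDne : D.det ≠ 0 := hDdet.ne_zero
  have hinvC : ContinuousAt Inv.inv D := by
    refine continuousAt_matrix_inv D ?_
    rw [Ring.inverse_eq_inv']
    exact continuousAt_inv₀ hDne
  have hMinv : Tendsto (fun ξ => (D + E ξ)⁻¹) l (𝓝 D⁻¹) := hinvC.tendsto.comp hM
  have hMdet : Tendsto (fun ξ => (D + E ξ).det) l (𝓝 D.det) :=
    (continuous_id.matrix_det.tendsto D).comp hM
  -- scalar c ξ = ν ξ + 1' M⁻¹ 1
  have hdotc : Tendsto (fun ξ => ones n ⬝ᵥ (D + E ξ)⁻¹.mulVec (ones n)) l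
      (𝓝 (ones n ⬝ᵥ D⁻¹.mulVec (ones n))) :=
    ((continuous_const.dotProduct
      (continuous_id.matrix_mulVec continuous_const)).tendsto D⁻¹).comp hMinv
  have hc : Tendsto (fun ξ => ν ξ + ones n ⬝ᵥ (D + E ξ)⁻¹.mulVec (ones n)) l
      (𝓝 (ones n ⬝ᵥ D⁻¹.mulVec (ones n))) := by
    have := hν0.add hdotc
    simpa using this
  -- A ξ
  set A : ℝ → Matrix (Fin n) (Fin n) ℝ := fun ξ =>
    (D + E ξ)⁻¹ - (ν ξ + ones n ⬝ᵥ (D + E ξ)⁻¹.mulVec (ones n))⁻¹ •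
      ((D + E ξ)⁻¹ * vecMulVec (ones n) (ones n) * (D + E ξ)⁻¹) with hAdef
  have hA : Tendsto A l (𝓝 (Gmat D)) := by
    have h1 : Tendsto (fun ξ =>
        (D + E ξ)⁻¹ * vecMulVec (ones n) (ones n) * (D + E ξ)⁻¹) l
        (𝓝 (D⁻¹ * vecMulVec (ones n) (ones n) * D⁻¹)) :=
      (hMinv.mul tendsto_const_nhds).mul hMinv
    exact hMinv.sub ((hc.inv₀ hD1).smul h1)
  -- eventually, ν ξ • (Sg ξ)⁻¹ = A ξ
  have hev : ∀ᶠ ξ in l, (Sg ξ)⁻¹ = (ν ξ)⁻¹ • A ξ := by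
    filter_upwards [self_mem_nhdsWithin, hMdet.eventually_ne hDne, hc.eventually_ne hD1]
      with ξ hξ hdu hcne
    have hξ0 : (0:ℝ) < ξ := hξ
    have hν : ν ξ ≠ 0 := (hνpos ξ hξ0).ne'
    have hone : Sg ξ * ((ν ξ)⁻¹ • A ξ) = 1 := by
      rw [hdecomp ξ hξ0, hAdef]
      exact SM_identity (D + E ξ) (isUnit_iff_ne_zero.2 hdu) (ones n) (ones n) (ν ξ) hν hcne
    exact inv_eq_right_inv hone
  constructor
  · intro i j
    -- the limit function in terms of A
    have hXA : Tendsto (fun ξ => X ⬝ᵥ (A ξ).mulVec X) l (𝓝 (X ⬝ᵥ (Gmat D).mulVec X)) :=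
      ((continuous_const.dotProduct
        (continuous_id.matrix_mulVec continuous_const)).tendsto (Gmat D)).comp hA
    have hmat : Tendsto (fun ξ => (A ξ * vecMulVec X X * A ξ) i j) l
        (𝓝 ((Gmat D * vecMulVec X X * Gmat D) i j)) :=
      ((((continuous_id.matrix_mul continuous_const).matrix_mul
        continuous_id).matrix_elem i j).tendsto (Gmat D)).comp hA
    have hFA : Tendsto (fun ξ => (X ⬝ᵥ (A ξ).mulVec X)⁻¹ * (A ξ * vecMulVec X X * A ξ) i j) l
        (𝓝 (Hmat D X i j)) := by
      have : Hmat D X i j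
          = (X ⬝ᵥ (Gmat D).mulVec X)⁻¹ * (Gmat D * vecMulVec X X * Gmat D) i j := by
        simp [Hmat, Matrix.smul_apply, smul_eq_mul]
      rw [this]
      exact (hXA.inv₀ hX).mul hmat
    refine hFA.congr' ?_
    filter_upwards [self_mem_nhdsWithin, hev] with ξ hξ hSg
    have hξ0 : (0:ℝ) < ξ := hξ
    have hν : ν ξ ≠ 0 := (hνpos ξ hξ0).ne'
    rw [hSg]
    simp only [Matrix.smul_apply, smul_eq_mul, Matrix.smul_mul, Matrix.mul_smul,
      smul_mulVec, dotProduct_smul, smul_smul, smul_eq_mul]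
    rw [mul_inv]
    field_simp
  · -- H ≠ 0
    have hGsymm : (Gmat D).IsSymm := by
      have hDinv : D⁻¹ᵀ = D⁻¹ := by
        rw [transpose_nonsing_inv, hDsymm.eq]
      have hPt : (vecMulVec (ones n) (ones n))ᵀ = vecMulVec (ones n) (ones n) := by
        ext i j
        simp [Matrix.transpose_apply, vecMulVec_apply, mul_comm]
      unfold Matrix.IsSymm Gmat
      rw [transpose_sub, transpose_smul, transpose_mul, transpose_mul, hDinv, hPt,
        ← Matrix.mul_assoc]
    have hvm : X ᵥ* Gmat D = (Gmat D).mulVec X := by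
      rw [← Matrix.mulVec_transpose, hGsymm.eq]
    have hGX : ∃ i, (Gmat D).mulVec X i ≠ 0 := by
      by_contra h
      push_neg at h
      apply hX
      simp only [dotProduct]
      exact Finset.sum_eq_zero fun i _ => by rw [h i, mul_zero]
    obtain ⟨i, hi⟩ := hGX
    have hentry : Hmat D X i i
        = (X ⬝ᵥ (Gmat D).mulVec X)⁻¹ * ((Gmat D).mulVec X i * (Gmat D).mulVec X i) := by
      rw [Hmat, mul_vmv_mul, hvm]
      simp [Matrix.smul_apply, vecMulVec_apply, smul_eq_mul]
    intro h0
    have : Hmat D X i i = 0 := by rw [h0]; rfl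
    rw [hentry] at this
    exact (mul_ne_zero (inv_ne_zero hX) (mul_ne_zero hi hi)) this
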